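/- For the kernel k-means cluster assignment model with Gaussian kernel K(x,x') = exp(−γ‖x−x'‖²), the log probability ratio log[P(ω_c|x)/(1−P(ω_c|x))] can be rewritten as β·softmin_{k≠c}{ softmin^γ_{j∈C_k} { softmax^γ_{i∈C_c} { w_{ij}·x + b_{ijk} } } } with w_{ij} = 2(x_i − x_j) and b_{ijk} = ‖x_j‖² − ‖x_i‖² + γ^{-1}(log Z_k − log Z_c). -/

import Mathlib

open Real Finset

/-- Neuralization of kernel k-means with Gaussian kernel: the log probability ratio
in favor of cluster `c` equals `β · softmin_{k≠c} softmin^γ_{j∈C_k} softmax^γ_{i∈C_c}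
{ w_{ij}·x + b_{ijk} }` with `w_{ij} = 2(x_i - x_j)` and
`b_{ijk} = ‖x_j‖² - ‖x_i‖² + γ⁻¹ (log Z_k - log Z_c)`. -/
theorem stmt_15 {K d : ℕ} {ι : Type*} (hK : 2 ≤ K)
    (pts : ι → Fin d → ℝ) (C : Fin K → Finset ι) (hC : ∀ k, (C k).Nonempty)
    (Z : Fin K → ℝ) (hZ : ∀ k, 0 < Z k)
    (γ β : ℝ) (hγ : 0 < γ) (hβ : 0 < β)
    (c : Fin K) (x : Fin d → ℝ) :
    Real.log ((((Z c)⁻¹ * ∑ i ∈ C c, Real.exp (-γ * ∑ l, (x l - pts i l) ^ 2)) ^ (β / γ)) /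
        ∑ k ∈ Finset.univ.erase c,
          ((Z k)⁻¹ * ∑ j ∈ C k, Real.exp (-γ * ∑ l, (x l - pts j l) ^ 2)) ^ (β / γ))
      = β * (-β⁻¹ * Real.log (∑ k ∈ Finset.univ.erase c, Real.exp (-β *
          (-γ⁻¹ * Real.log (∑ j ∈ C k, Real.exp (-γ *
            (γ⁻¹ * Real.log (∑ i ∈ C c, Real.exp (γ *
              ((∑ l, 2 * (pts i l - pts j l) * x l)
                + ((∑ l, (pts j l) ^ 2) - (∑ l, (pts i l) ^ 2))
                + γ⁻¹ * (Real.log (Z k) - Real.log (Z c)))))))))))) := by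
  have hγ' : γ ≠ 0 := hγ.ne'
  have hβ' : β ≠ 0 := hβ.ne'
  set S : Fin K → ℝ := fun k => ∑ j ∈ C k, Real.exp (-γ * ∑ l, (x l - pts j l) ^ 2) with hSdef
  have hSpos : ∀ k, 0 < S k := fun k =>
    Finset.sum_pos (fun j _ => Real.exp_pos _) (hC k)
  -- Step 1: innermost sum
  have h1 : ∀ (k : Fin K), ∀ j : ι,
      (∑ i ∈ C c, Real.exp (γ *
        ((∑ l, 2 * (pts i l - pts j l) * x l)
          + ((∑ l, (pts j l) ^ 2) - (∑ l, (pts i l) ^ 2))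
          + γ⁻¹ * (Real.log (Z k) - Real.log (Z c)))))
      = S c * (Real.exp (γ * ∑ l, (x l - pts j l) ^ 2) * (Z k / Z c)) := by
    intro k j
    have step : ∀ i : ι, Real.exp (γ *
        ((∑ l, 2 * (pts i l - pts j l) * x l)
          + ((∑ l, (pts j l) ^ 2) - (∑ l, (pts i l) ^ 2))
          + γ⁻¹ * (Real.log (Z k) - Real.log (Z c))))
        = Real.exp (-γ * ∑ l, (x l - pts i l) ^ 2)
          * (Real.exp (γ * ∑ l, (x l - pts j l) ^ 2) * (Z k / Z c)) := by
      intro i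
      have hexp : γ * ((∑ l, 2 * (pts i l - pts j l) * x l)
            + ((∑ l, (pts j l) ^ 2) - (∑ l, (pts i l) ^ 2))
            + γ⁻¹ * (Real.log (Z k) - Real.log (Z c)))
          = (-γ * ∑ l, (x l - pts i l) ^ 2) + (γ * ∑ l, (x l - pts j l) ^ 2)
            + (Real.log (Z k) - Real.log (Z c)) := by
        have h : ∑ l, (2 * (pts i l - pts j l) * x l + ((pts j l) ^ 2 - (pts i l) ^ 2))
            = ∑ l, (-(x l - pts i l) ^ 2 + (x l - pts j l) ^ 2) :=
          Finset.sum_congr rfl (fun l _ => by ring)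
        simp only [Finset.sum_add_distrib, Finset.sum_sub_distrib,
          Finset.sum_neg_distrib] at h
        linear_combination γ * h + (Real.log (Z k) - Real.log (Z c)) * mul_inv_cancel₀ hγ'
      rw [hexp, Real.exp_add, Real.exp_add, Real.exp_sub, Real.exp_log (hZ k),
        Real.exp_log (hZ c), mul_assoc]
    calc (∑ i ∈ C c, Real.exp (γ *
        ((∑ l, 2 * (pts i l - pts j l) * x l)
          + ((∑ l, (pts j l) ^ 2) - (∑ l, (pts i l) ^ 2))
          + γ⁻¹ * (Real.log (Z k) - Real.log (Z c)))))
        = ∑ i ∈ C c, Real.exp (-γ * ∑ l, (x l - pts i l) ^ 2)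
            * (Real.exp (γ * ∑ l, (x l - pts j l) ^ 2) * (Z k / Z c)) :=
          Finset.sum_congr rfl (fun i _ => step i)
      _ = S c * (Real.exp (γ * ∑ l, (x l - pts j l) ^ 2) * (Z k / Z c)) := by
          rw [← Finset.sum_mul]
  -- Step 2: middle sum
  have h2 : ∀ k : Fin K,
      (∑ j ∈ C k, Real.exp (-γ *
        (γ⁻¹ * Real.log (∑ i ∈ C c, Real.exp (γ *
          ((∑ l, 2 * (pts i l - pts j l) * x l)
            + ((∑ l, (pts j l) ^ 2) - (∑ l, (pts i l) ^ 2))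
            + γ⁻¹ * (Real.log (Z k) - Real.log (Z c))))))))
      = S k * (Z c / (S c * Z k)) := by
    intro k
    have step : ∀ j : ι, Real.exp (-γ *
        (γ⁻¹ * Real.log (∑ i ∈ C c, Real.exp (γ *
          ((∑ l, 2 * (pts i l - pts j l) * x l)
            + ((∑ l, (pts j l) ^ 2) - (∑ l, (pts i l) ^ 2))
            + γ⁻¹ * (Real.log (Z k) - Real.log (Z c)))))))
        = Real.exp (-γ * ∑ l, (x l - pts j l) ^ 2) * (Z c / (S c * Z k)) := by
      intro j
      rw [h1 k j]
      have hsc := hSpos c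
      have hzk := hZ k
      have hzc := hZ c
      have hpos : 0 < S c * (Real.exp (γ * ∑ l, (x l - pts j l) ^ 2) * (Z k / Z c)) := by
        positivity
      rw [show -γ * (γ⁻¹ * Real.log (S c *
            (Real.exp (γ * ∑ l, (x l - pts j l) ^ 2) * (Z k / Z c))))
          = -(γ * γ⁻¹ * Real.log (S c *
            (Real.exp (γ * ∑ l, (x l - pts j l) ^ 2) * (Z k / Z c)))) by ring,
        mul_inv_cancel₀ hγ', one_mul, Real.exp_neg, Real.exp_log hpos, neg_mul,
        Real.exp_neg]
      generalize Real.exp (γ * ∑ l, (x l - pts j l) ^ 2) = E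
      field_simp
    calc (∑ j ∈ C k, Real.exp (-γ *
        (γ⁻¹ * Real.log (∑ i ∈ C c, Real.exp (γ *
          ((∑ l, 2 * (pts i l - pts j l) * x l)
            + ((∑ l, (pts j l) ^ 2) - (∑ l, (pts i l) ^ 2))
            + γ⁻¹ * (Real.log (Z k) - Real.log (Z c))))))))
        = ∑ j ∈ C k, Real.exp (-γ * ∑ l, (x l - pts j l) ^ 2) * (Z c / (S c * Z k)) :=
          Finset.sum_congr rfl (fun j _ => step j)
      _ = S k * (Z c / (S c * Z k)) := by rw [← Finset.sum_mul]
  -- Step 3: outer summand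
  have h3 : ∀ k : Fin K,
      Real.exp (-β * (-γ⁻¹ * Real.log (S k * (Z c / (S c * Z k)))))
      = (((Z k)⁻¹ * S k) / ((Z c)⁻¹ * S c)) ^ (β / γ) := by
    intro k
    have hsk := hSpos k
    have hsc := hSpos c
    have hzk := hZ k
    have hzc := hZ c
    have hpos : (0:ℝ) < ((Z k)⁻¹ * S k) / ((Z c)⁻¹ * S c) := by positivity
    have harg : S k * (Z c / (S c * Z k)) = ((Z k)⁻¹ * S k) / ((Z c)⁻¹ * S c) := by
      field_simp
    rw [harg, Real.rpow_def_of_pos hpos]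
    congr 1
    ring
  simp only [h2, h3]
  -- Step 4: assemble
  have hAc : (0:ℝ) < (Z c)⁻¹ * S c := by
    have := hSpos c; have := hZ c; positivity
  have hsum : ∑ k ∈ Finset.univ.erase c, (((Z k)⁻¹ * S k) / ((Z c)⁻¹ * S c)) ^ (β / γ)
      = (∑ k ∈ Finset.univ.erase c, ((Z k)⁻¹ * S k) ^ (β / γ)) / ((Z c)⁻¹ * S c) ^ (β / γ) := by
    rw [Finset.sum_div]
    refine Finset.sum_congr rfl (fun k _ => ?_)
    rw [Real.div_rpow (by have := hSpos k; have := hZ k; positivity) hAc.le]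
  rw [hsum]
  have hne : (Finset.univ.erase c).Nonempty := by
    obtain ⟨k, hk⟩ := Fintype.exists_ne_of_one_lt_card (by simp; omega) c
    exact ⟨k, Finset.mem_erase.2 ⟨hk, Finset.mem_univ k⟩⟩
  have hD : (0:ℝ) < ∑ k ∈ Finset.univ.erase c, ((Z k)⁻¹ * S k) ^ (β / γ) :=
    Finset.sum_pos (fun k _ => Real.rpow_pos_of_pos
      (by have := hSpos k; have := hZ k; positivity) _) hne
  rw [show β * (-β⁻¹ * Real.log ((∑ k ∈ Finset.univ.erase c, ((Z k)⁻¹ * S k) ^ (β / γ))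
      / ((Z c)⁻¹ * S c) ^ (β / γ)))
    = -Real.log ((∑ k ∈ Finset.univ.erase c, ((Z k)⁻¹ * S k) ^ (β / γ))
      / ((Z c)⁻¹ * S c) ^ (β / γ)) by
      rw [neg_mul, mul_neg, ← mul_assoc, mul_inv_cancel₀ hβ', one_mul]]
  rw [← Real.log_inv, inv_div]
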